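/- The generating function of the sequence P_k = Σ_{i=0}^k (−1)^i (2i+1) q^{C(k+1,2) − C(i+1,2)} satisfies Σ_{k≥0} P_k z^k = Σ_{j≥0} (1 − z q^j)/(1 + z q^j)^2 · q^{C(j+1,2)} z^j as formal power series in z with coefficients in ℤ[q]. -/

import Mathlib

open PowerSeries Polynomial

/-- `P_k = Σ_{i=0}^k (−1)^i (2i+1) q^{C(k+1,2) − C(i+1,2)}` as a polynomial in `q`. -/
noncomputable def Ppoly (k : ℕ) : Polynomial ℤ :=
  ∑ i ∈ Finset.range (k + 1),
    Polynomial.C ((-1 : ℤ) ^ i * (2 * i + 1)) *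
      Polynomial.X ^ ((k + 1).choose 2 - (i + 1).choose 2)

/-- The `j`-th summand `(1 − zq^j)/(1 + zq^j)² · q^{C(j+1,2)} z^j` of the right-hand
side, as a power series in `z` over `ℤ[q]`. -/
noncomputable def Pterm (j : ℕ) : PowerSeries (Polynomial ℤ) :=
  (1 - PowerSeries.C (Polynomial.X ^ j) * PowerSeries.X) *
    PowerSeries.invOfUnit ((1 + PowerSeries.C (Polynomial.X ^ j) * PowerSeries.X) ^ 2) 1 *
    PowerSeries.C (Polynomial.X ^ ((j + 1).choose 2)) * PowerSeries.X ^ j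

noncomputable def Sser (j : ℕ) : PowerSeries (Polynomial ℤ) :=
  PowerSeries.mk fun i => Polynomial.C ((-1 : ℤ)^i * (2*i+1)) * Polynomial.X ^ (j*i)

lemma key (j : ℕ) :
    (1 + PowerSeries.C (Polynomial.X ^ j) * PowerSeries.X)^2 * Sser j
      = 1 - PowerSeries.C (Polynomial.X ^ j) * PowerSeries.X := by
  have hak : ∀ k : ℕ, (PowerSeries.C (R := Polynomial ℤ) (Polynomial.X ^ j) * PowerSeries.X)^k
      = PowerSeries.C (Polynomial.X ^ (j*k)) * PowerSeries.X^k := by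
    intro k
    rw [mul_pow, ← map_pow, ← pow_mul]
  have hc : ∀ k n : ℕ, (PowerSeries.coeff n)
      ((PowerSeries.C (R := Polynomial ℤ) (Polynomial.X ^ j) * PowerSeries.X)^k * Sser j)
      = if k ≤ n then Polynomial.C ((-1:ℤ)^(n-k) * (2*((n-k : ℕ) : ℤ)+1)) *
          Polynomial.X^(j*k + j*(n-k)) else 0 := by
    intro k n
    rw [hak, mul_assoc, PowerSeries.coeff_C_mul, PowerSeries.coeff_X_pow_mul']
    simp only [Sser, coeff_mk]
    split_ifs with h
    · rw [pow_add]; ring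
    · simp
  have expand : (1 + PowerSeries.C (R := Polynomial ℤ) (Polynomial.X ^ j) * PowerSeries.X)^2 * Sser j
      = (PowerSeries.C (R := Polynomial ℤ) (Polynomial.X ^ j) * PowerSeries.X)^0 * Sser j
        + (PowerSeries.C (R := Polynomial ℤ) (Polynomial.X ^ j) * PowerSeries.X)^1 * Sser j
        + (PowerSeries.C (R := Polynomial ℤ) (Polynomial.X ^ j) * PowerSeries.X)^1 * Sser j
        + (PowerSeries.C (R := Polynomial ℤ) (Polynomial.X ^ j) * PowerSeries.X)^2 * Sser j := by
    ring
  ext n : 1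
  rw [expand]
  simp only [map_add, map_sub, hc, PowerSeries.coeff_one, PowerSeries.coeff_C_mul,
    PowerSeries.coeff_X]
  match n with
  | 0 => norm_num
  | 1 => norm_num; ring
  | (n+2) =>
    norm_num
    have e1 : j + j*(n+1) = j*(n+2) := by ring
    have e2 : j*2 + j*n = j*(n+2) := by ring
    rw [e1, e2]
    simp [pow_succ]
    ring

lemma two_choose (k : ℕ) : 2 * ((k+1).choose 2) = k * (k+1) := by
  induction k with
  | zero => simp
  | succ k ih =>
    have h : (k+2).choose 2 = (k+1).choose 1 + (k+1).choose 2 := Nat.choose_succ_succ _ _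
    rw [h, Nat.choose_one_right, Nat.mul_add, ih]
    ring

lemma exp_eq {j n : ℕ} (h : j ≤ n) :
    (n+1).choose 2 - ((n-j)+1).choose 2 = j*(n-j) + (j+1).choose 2 := by
  obtain ⟨m, rfl⟩ := Nat.exists_eq_add_of_le h
  have h1 := two_choose (j+m)
  have h2 := two_choose m
  have h3 := two_choose j
  have key2 : 2*((j+m+1).choose 2) = 2*((m+1).choose 2 + (j*m + (j+1).choose 2)) := by
    rw [Nat.mul_add, Nat.mul_add, h1, h2, h3]
    ring
  have e := Nat.eq_of_mul_eq_mul_left (by norm_num : 0 < 2) key2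
  rw [Nat.add_sub_cancel_left, e, Nat.add_sub_cancel_left]


lemma pterm_eq (j : ℕ) : Pterm j
    = Sser j * PowerSeries.C (Polynomial.X ^ ((j+1).choose 2)) * PowerSeries.X ^ j := by
  have hu : PowerSeries.constantCoeff
      ((1 + PowerSeries.C (Polynomial.X ^ j) * PowerSeries.X) ^ 2) = ((1 : (Polynomial ℤ)ˣ) : Polynomial ℤ) := by
    simp
  have hinv := PowerSeries.mul_invOfUnit _ 1 hu
  have main : (1 - PowerSeries.C (Polynomial.X ^ j) * PowerSeries.X) *
      PowerSeries.invOfUnit ((1 + PowerSeries.C (Polynomial.X ^ j) * PowerSeries.X) ^ 2) 1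
      = Sser j := by
    calc (1 - PowerSeries.C (Polynomial.X ^ j) * PowerSeries.X) *
        PowerSeries.invOfUnit ((1 + PowerSeries.C (Polynomial.X ^ j) * PowerSeries.X) ^ 2) 1
        = ((1 + PowerSeries.C (Polynomial.X ^ j) * PowerSeries.X)^2 * Sser j) *
          PowerSeries.invOfUnit ((1 + PowerSeries.C (Polynomial.X ^ j) * PowerSeries.X) ^ 2) 1 := by
          rw [key]
      _ = Sser j * (((1 + PowerSeries.C (Polynomial.X ^ j) * PowerSeries.X)^2) *
          PowerSeries.invOfUnit ((1 + PowerSeries.C (Polynomial.X ^ j) * PowerSeries.X) ^ 2) 1) := by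
          ring
      _ = Sser j := by rw [hinv, mul_one]
  rw [Pterm, main]

lemma pterm_coeff {j n : ℕ} (h : j ≤ n) :
    (PowerSeries.coeff n) (Pterm j)
      = Polynomial.C ((-1:ℤ)^(n-j) * (2*((n-j : ℕ) : ℤ)+1)) *
          Polynomial.X ^ (j*(n-j) + (j+1).choose 2) := by
  obtain ⟨d, rfl⟩ := Nat.exists_eq_add_of_le h
  rw [pterm_eq, show j + d = d + j by ring, PowerSeries.coeff_mul_X_pow,
    PowerSeries.coeff_mul_C]
  have hd : d + j - j = d := by omega
  rw [hd]
  simp only [Sser, coeff_mk]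
  rw [pow_add]
  ring

/-- `Σ_{k≥0} P_k z^k = Σ_{j≥0} (1 − zq^j)/(1 + zq^j)² q^{C(j+1,2)} z^j` as formal
power series in `z` over `ℤ[q]`; the infinite sum on the right is understood
coefficientwise (the `j`-th term has order `≥ j` in `z`). -/
theorem stmt10 :
    ∀ n : ℕ, Ppoly n
      = ∑ j ∈ Finset.range (n + 1), (PowerSeries.coeff n) (Pterm j) := by
  intro n
  have hP : Ppoly n = ∑ j ∈ Finset.range (n+1),
      Polynomial.C ((-1:ℤ)^(n-j) * (2*((n-j:ℕ):ℤ)+1)) *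
        Polynomial.X ^ ((n+1).choose 2 - ((n-j)+1).choose 2) := by
    rw [Ppoly, ← Finset.sum_range_reflect]
    apply Finset.sum_congr rfl
    intro j hj
    have h1 : n + 1 - 1 - j = n - j := by omega
    rw [h1]
  rw [hP]
  apply Finset.sum_congr rfl
  intro j hj
  rw [Finset.mem_range] at hj
  have hjn : j ≤ n := by omega
  rw [pterm_coeff hjn, exp_eq hjn]
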